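/- Let G be an infinite discrete group. Then the Bernoulli flow 2^G has a point z that is free (the map g ↦ g·z is injective) and whose orbit G·z is dense in 2^G. -/

import Mathlib

open Pointwise

section Defs

variable (G : Type*) [Group G]

/-- The right-shift of `G` on `G → A`: `(g • z) h = z (h * g)`. -/
instance (priority := high) shiftSMul (A : Type*) : SMul G (G → A) :=
  ⟨fun g z h => z (h * g)⟩

/-- The right-shift action of `G` on `G → A` is a `G`-action (the Bernoulli flow when
`A = Bool`). -/
instance shiftMulAction (A : Type*) : MulAction G (G → A) where
  one_smul z := funext fun h => by show z (h * 1) = z h; rw [mul_one]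
  mul_smul g₁ g₂ z := funext fun h => by
    show z (h * (g₁ * g₂)) = z (h * g₁ * g₂)
    rw [mul_assoc]

/-- `S ⊆ G` is `D`-separated if `Dg ∩ Dh = ∅` for all distinct `g, h ∈ S`. -/
def DSeparated (D S : Set G) : Prop :=
  ∀ g ∈ S, ∀ h ∈ S, g ≠ h → Disjoint (D * ({g} : Set G)) (D * ({h} : Set G))

/-- The separated covering property for a `G`-flow `X`: for every finite `D ⊆ G`
and every nonempty open `U ⊆ X` there is a `D`-separated `S ⊆ G` with `S⁻¹U = X`. -/
def SCP (X : Type*) [TopologicalSpace X] [MulAction G X] : Prop :=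
  ∀ D : Set G, D.Finite → ∀ U : Set X, IsOpen U → U.Nonempty →
    ∃ S : Set G, DSeparated G D S ∧ ∀ x : X, ∃ s ∈ S, s • x ∈ U

/-- A `G`-flow is minimal if every orbit is dense. -/
def IsMinimalFlow (X : Type*) [TopologicalSpace X] [MulAction G X] : Prop :=
  ∀ x : X, Dense (MulAction.orbit G x)

/-- Two `G`-flows `X` and `Y` are disjoint if the only closed `G`-invariant subset of
`X × Y` projecting onto both factors is `X × Y` itself. -/
def FlowsDisjoint (X Y : Type*) [TopologicalSpace X] [TopologicalSpace Y]
    [MulAction G X] [MulAction G Y] : Prop :=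
  ∀ J : Set (X × Y), IsClosed J → (∀ (g : G), ∀ p ∈ J, g • p ∈ J) →
    Prod.fst '' J = Set.univ → Prod.snd '' J = Set.univ → J = Set.univ

end Defs


section Construction

open Cardinal

universe u

variable (G : Type u) [Group G] [Infinite G]

/-- Requirements: `inl (F, P)` asks for the pattern `P` on `F` to appear in some right
translate; `inr c` asks for a witness that right translation by `c` changes the point. -/
abbrev BReq := (Finset G × Finset G) ⊕ G

variable {G}
variable [DecidableEq G]

/-- The coordinates used by requirement `r` placed at `γ`. -/
def bsite (r : BReq G) (γ : G) : Finset G :=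
  match r with
  | .inl (F, _) => F.image (· * γ)
  | .inr c => {γ, γ * c}

/-- The coordinates of requirement `r` placed at `γ` that get value `true`. -/
def btrue (r : BReq G) (γ : G) : Finset G :=
  match r with
  | .inl (F, P) => (P ∩ F).image (· * γ)
  | .inr _ => {γ}

lemma btrue_subset_bsite (r : BReq G) (γ : G) : btrue r γ ⊆ bsite r γ := by
  match r with
  | .inl (F, P) => exact Finset.image_subset_image Finset.inter_subset_right
  | .inr c =>
    intro a ha
    simp only [btrue, Finset.mem_singleton] at ha
    subst ha
    simp [bsite]

lemma exists_avoid_aux (T : Set G) (hT : #T < #G) (s : Finset G) (f : G → G → G)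
    (hf : ∀ c, Function.Injective (f c)) :
    ∃ γ : G, ∀ c ∈ s, f c γ ∉ T := by
  have hcard : #(⋃ c ∈ (s : Set G), f c ⁻¹' T) < #G := by
    refine lt_of_le_of_lt (mk_biUnion_le _ _) (mul_lt_of_lt (aleph0_le_mk G) ?_ ?_)
    · exact lt_of_lt_of_le (lt_aleph0_iff_finite.2 (by exact inferInstance)) (aleph0_le_mk G)
    · exact lt_of_le_of_lt (ciSup_le' fun c => mk_preimage_of_injective _ _ (hf c)) hT
  have hne : (⋃ c ∈ (s : Set G), f c ⁻¹' T) ≠ Set.univ := by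
    intro h
    rw [h, mk_univ] at hcard
    exact lt_irrefl _ hcard
  obtain ⟨γ, hγ⟩ := Set.ne_univ_iff_exists_notMem _ |>.1 hne
  exact ⟨γ, fun c hc hct => hγ (Set.mem_biUnion hc hct)⟩

lemma exists_avoid (r : BReq G) (T : Set G) (hT : #T < #G) :
    ∃ γ : G, Disjoint (↑(bsite r γ) : Set G) T := by
  match r with
  | .inl (F, P) =>
    obtain ⟨γ, hγ⟩ := exists_avoid_aux T hT F (fun c γ => c * γ)
      (fun c => mul_right_injective c)
    refine ⟨γ, Set.disjoint_left.2 ?_⟩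
    intro a ha
    simp only [bsite, Finset.coe_image, Set.mem_image, Finset.mem_coe] at ha
    obtain ⟨c, hc, rfl⟩ := ha
    exact hγ c hc
  | .inr c =>
    obtain ⟨γ, hγ⟩ := exists_avoid_aux T hT {1, c} (fun d γ => γ * d)
      (fun d => mul_left_injective d)
    refine ⟨γ, Set.disjoint_left.2 ?_⟩
    intro a ha
    simp only [bsite, Finset.coe_insert, Set.mem_insert_iff, Finset.coe_singleton,
      Set.mem_singleton_iff] at ha
    rcases ha with rfl | rfl
    · simpa using hγ 1 (by simp)
    · exact hγ c (by simp)

lemma mk_iUnion_lt {α ι : Type u} {κ : Cardinal.{u}} (hκ : ℵ₀ ≤ κ) (hι : #ι < κ)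
    (s : ι → Set α) (hs : ∀ i, (s i).Finite) : #(⋃ i, s i) < κ := by
  rcases lt_or_ge (#ι) ℵ₀ with h | h
  · have : Finite ι := lt_aleph0_iff_finite.1 h
    exact lt_of_lt_of_le (Set.finite_iUnion hs).lt_aleph0 hκ
  · calc #(⋃ i, s i) ≤ #ι * ⨆ i, #(s i) := mk_iUnion_le s
      _ ≤ #ι * ℵ₀ := mul_le_mul_right (ciSup_le' fun i => ((hs i).lt_aleph0).le) _
      _ = #ι := mul_aleph0_eq h
      _ < κ := hι

lemma mk_breq (G : Type u) [Group G] [Infinite G] : #(BReq G) = #G := by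
  simp only [BReq, mk_sum, mk_prod, mk_finset_of_infinite, lift_id]
  rw [mul_eq_self (aleph0_le_mk G), add_eq_self (aleph0_le_mk G)]

variable (G)

/-- Index type: a well order of the right cardinality. -/
abbrev BIdx : Type u := (Cardinal.ord #(BReq G)).ToType

noncomputable def beq : BReq G ≃ BIdx G :=
  Classical.choice (Cardinal.eq.1 (mk_ord_toType _).symm)

lemma mk_Iio_lt (x : BIdx G) : #(Set.Iio x) < #G :=
  (mk_Iio_toType_ord_lt x).trans_le (mk_breq G).le

noncomputable def bg : BIdx G → G :=
  (wellFounded_lt (α := BIdx G)).fix fun x ih =>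
    (exists_avoid ((beq G).symm x)
      (⋃ y : Set.Iio x, ↑(bsite ((beq G).symm y.1) (ih y.1 y.2)))
      (mk_iUnion_lt (aleph0_le_mk G) (mk_Iio_lt G x) _
        (fun y => (bsite _ _).finite_toSet))).choose

lemma bg_spec (x : BIdx G) :
    Disjoint (↑(bsite ((beq G).symm x) (bg G x)) : Set G)
      (⋃ y : Set.Iio x, ↑(bsite ((beq G).symm y.1) (bg G y.1))) := by
  unfold bg
  rw [WellFounded.fix_eq]
  exact (exists_avoid ((beq G).symm x)
    (⋃ y : Set.Iio x, ↑(bsite ((beq G).symm y.1) (bg G y.1)))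
    (mk_iUnion_lt (aleph0_le_mk G) (mk_Iio_lt G x) _
      (fun y => (bsite _ _).finite_toSet))).choose_spec

lemma bg_disjoint {x y : BIdx G} (h : x ≠ y) :
    Disjoint (↑(bsite ((beq G).symm x) (bg G x)) : Set G)
      (↑(bsite ((beq G).symm y) (bg G y)) : Set G) := by
  rcases h.lt_or_gt with hlt | hlt
  · exact ((bg_spec G y).mono_right
      (Set.subset_iUnion (fun w : Set.Iio y => (↑(bsite ((beq G).symm w.1) (bg G w.1)) : Set G))
        ⟨x, hlt⟩)).symm
  · exact (bg_spec G x).mono_right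
      (Set.subset_iUnion (fun w : Set.Iio x => (↑(bsite ((beq G).symm w.1) (bg G w.1)) : Set G))
        ⟨y, hlt⟩)

open Classical in
/-- The generic point of the Bernoulli flow. -/
noncomputable def bz : G → Bool := fun a =>
  decide (∃ x : BIdx G, a ∈ btrue ((beq G).symm x) (bg G x))

open Classical in
lemma bz_eval (x : BIdx G) (a : G) (ha : a ∈ bsite ((beq G).symm x) (bg G x)) :
    bz G a = true ↔ a ∈ btrue ((beq G).symm x) (bg G x) := by
  rw [bz, decide_eq_true_eq]
  constructor
  · rintro ⟨y, hy⟩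
    rcases eq_or_ne x y with rfl | hne
    · exact hy
    · exact absurd ha (Set.disjoint_right.1 (bg_disjoint G hne)
        (btrue_subset_bsite _ _ hy)).elim
  · exact fun h => ⟨x, h⟩

lemma bz_pattern (F P : Finset G) :
    ∃ γ : G, ∀ h ∈ F, bz G (h * γ) = decide (h ∈ P) := by
  set x := beq G (Sum.inl (F, P)) with hx
  refine ⟨bg G x, fun h hF => ?_⟩
  have hsymm : (beq G).symm x = Sum.inl (F, P) := Equiv.symm_apply_apply _ _
  have hsite : h * bg G x ∈ bsite ((beq G).symm x) (bg G x) := by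
    rw [hsymm]; show h * bg G x ∈ F.image (· * bg G x)
    exact Finset.mem_image_of_mem _ hF
  have := bz_eval G x (h * bg G x) hsite
  rw [hsymm] at this
  have htrue : h * bg G x ∈ btrue (Sum.inl (F, P)) (bg G x) ↔ h ∈ P := by
    simp only [btrue, Finset.mem_image]
    constructor
    · rintro ⟨c, hc, hce⟩
      obtain rfl := mul_left_injective (bg G x) hce
      exact (Finset.mem_inter.1 hc).1
    · exact fun hP => ⟨h, Finset.mem_inter.2 ⟨hP, hF⟩, rfl⟩
  rw [htrue] at this
  by_cases hP : h ∈ P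
  · rw [this.2 hP]
    simp [hP]
  · rw [decide_eq_false hP]
    exact Bool.eq_false_iff.2 fun hb => hP (this.1 hb)

lemma bz_free (c : G) (hc : c ≠ 1) : ∃ a : G, bz G (a * c) ≠ bz G a := by
  set x := beq G (Sum.inr c) with hx
  set γ := bg G x with hγ
  have hsymm : (beq G).symm x = Sum.inr c := Equiv.symm_apply_apply _ _
  refine ⟨γ, ?_⟩
  have h1 : bz G γ = true := by
    rw [bz_eval G x γ (by rw [hsymm]; simp [bsite, hγ]), hsymm]
    simp [btrue, hγ]
  have h2 : bz G (γ * c) = false := by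
    have := bz_eval G x (γ * c) (by rw [hsymm]; simp [bsite, hγ])
    rw [hsymm] at this
    simp only [btrue, Finset.mem_singleton] at this
    refine Bool.eq_false_iff.2 fun hb => ?_
    exact hc (mul_eq_left.1 (this.1 hb))
  rw [h1, h2]; simp

end Construction

/-- The Bernoulli flow `2^G` of an infinite group `G` has a free point
(the map `g ↦ g • z` is injective) whose orbit is dense. -/

theorem bernoulli_has_free_point_with_dense_orbit
    (G : Type*) [Group G] [Infinite G] :
    ∃ z : G → Bool,
      Function.Injective (fun g : G => g • z) ∧ Dense (MulAction.orbit G z) := by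
  classical
  refine ⟨bz G, ?_, ?_⟩
  · intro a b hab
    by_contra hne
    have hc : a⁻¹ * b ≠ 1 := fun h => hne (by
      have := congrArg (a * ·) h
      simpa [mul_assoc] using this.symm)
    obtain ⟨γ, hγ⟩ := bz_free G (a⁻¹ * b) hc
    have h1 : bz G (γ * a⁻¹ * a) = bz G (γ * a⁻¹ * b) := congrFun hab (γ * a⁻¹)
    rw [mul_assoc, inv_mul_cancel, mul_one, mul_assoc] at h1
    exact hγ h1.symm
  · intro w
    rw [mem_closure_iff_nhds]
    intro t ht
    rw [nhds_pi, Filter.mem_pi] at ht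
    obtain ⟨I, hIfin, ts, hts, hsub⟩ := ht
    set F := hIfin.toFinset with hF
    set P := F.filter (fun h => w h = true) with hP
    obtain ⟨γ, hγ⟩ := bz_pattern G F P
    refine ⟨γ • bz G, hsub ?_, MulAction.mem_orbit _ γ⟩
    intro i hi
    have hiF : i ∈ F := hIfin.mem_toFinset.2 hi
    have heval : (γ • bz G) i = bz G (i * γ) := rfl
    have hdec : decide (i ∈ P) = w i := by
      cases hwi : w i <;> simp [hP, Finset.mem_filter, hiF, hwi]
    rw [heval, hγ i hiF, hdec]
    exact mem_nhds_discrete.1 (hts i)
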